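/- In U(O), for all u,n ∈ ℤ≥0 and j,l ∈ ℕ+: D^{Γ,+}_{u,1}(j,l) · Λ^Γ_{j,l,n} = Σ_{i=0}^n (i+1) Λ^Γ_{j,l,n−i} · D^{Γ,+}_{i+u,1}(j,l). -/

import Mathlib

open Finset

noncomputable section

/- Setting: `A` plays the role of the universal enveloping algebra `U(O)` of the
Onsager algebra.  `X m = x_m^{Γ,+}`, `Y m = x_m^{Γ,-}`, `H m = h_m^Γ` (indexed by `ℤ`
via the conventions `x_{-m}^{Γ,±} = -x_m^{Γ,±}`, `x_0^{Γ,±} = 0`, `h_{-m}^Γ = h_m^Γ`),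
and the Lie brackets of `O` are imposed as commutator relations. -/
variable {A : Type*} [Ring A] [Algebra ℂ A]

/-- `Λ^Γ_{j,l,1} = -(h^Γ_{j+l} - h^Γ_{j-l})`. -/
def Lam1 (H : ℤ → A) (j l : ℤ) : A := -(H (j + l) - H (j - l))

/-- `D^{Γ,+}_{u,1}(j,l)`. -/
def Dp (X H : ℤ → A) (j l : ℤ) : ℕ → A
  | 0 => X j
  | u + 1 => ((1 : ℂ) / 2) • ⁅Dp X H j l u, Lam1 H j l⁆

/-- `D^{Γ,-}_{u,1}(j,l)`. -/
def Dm (Y H : ℤ → A) (j l : ℤ) : ℕ → A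
  | 0 => Y l
  | u + 1 => (-((1 : ℂ) / 2)) • ⁅Dm Y H j l u, Lam1 H j l⁆

/-- `p^Γ_s(j,l) = [x_j^{Γ,+}, D^{Γ,-}_{s-1,1}(j,l)]`. -/
def pG (X Y H : ℤ → A) (j l : ℤ) (s : ℕ) : A := ⁅X j, Dm Y H j l (s - 1)⁆

/-- `Λ^Γ_{j,l,n}`, via the recursion `n Λ_n = -∑_{i=1}^n p_i Λ_{n-i}` equivalent to the
exponential generating series definition. -/
def Lam (X Y H : ℤ → A) (j l : ℤ) : ℕ → A
  | 0 => 1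
  | n + 1 =>
      (-(((n : ℂ) + 1)⁻¹)) •
        ∑ i ∈ Finset.range (n + 1), pG X Y H j l (i + 1) * Lam X Y H j l (n - i)
  decreasing_by omega

/-- `D^{Γ,+}_{u,v}(j,l)`. -/
def DvP (X H : ℤ → A) (j l : ℤ) : ℕ → ℕ → A
  | u, 0 => if u = 0 then 1 else 0
  | u, v + 1 =>
      (((v : ℂ) + 1)⁻¹) • ∑ i ∈ Finset.range (u + 1), Dp X H j l i * DvP X H j l (u - i) v

/-- `D^{Γ,-}_{u,v}(j,l)`. -/
def DvM (Y H : ℤ → A) (j l : ℤ) : ℕ → ℕ → A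
  | u, 0 => if u = 0 then 1 else 0
  | u, v + 1 =>
      (((v : ℂ) + 1)⁻¹) • ∑ i ∈ Finset.range (u + 1), Dm Y H j l i * DvM Y H j l (u - i) v

/-! ### Auxiliary machinery for the proof -/

namespace DpLamAux

attribute [local instance 100] LieRing.ofAssociativeRing

section Tri

variable {M : Type*} [AddCommMonoid M]

lemma tri_swap (n : ℕ) (f : ℕ → ℕ → M) :
    ∑ i ∈ range (n + 1), ∑ k ∈ range (n - i + 1), f i k
      = ∑ k ∈ range (n + 1), ∑ i ∈ range (n - k + 1), f i k := by
  rw [Finset.sum_sigma' (range (n+1)) (fun i => range (n - i + 1)) (fun i k => f i k),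
    Finset.sum_sigma' (range (n+1)) (fun k => range (n - k + 1)) (fun k i => f i k)]
  refine Finset.sum_nbij' (fun x => ⟨x.2, x.1⟩) (fun x => ⟨x.2, x.1⟩) ?_ ?_ ?_ ?_ ?_
  · rintro ⟨a, b⟩ h
    simp only [Finset.mem_sigma, Finset.mem_range] at h ⊢
    omega
  · rintro ⟨a, b⟩ h
    simp only [Finset.mem_sigma, Finset.mem_range] at h ⊢
    omega
  · rintro ⟨a, b⟩ _
    rfl
  · rintro ⟨a, b⟩ _
    rfl
  · rintro ⟨a, b⟩ _
    rfl

lemma tri_diag (n : ℕ) (f : ℕ → ℕ → M) :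
    ∑ i ∈ range (n + 1), ∑ k ∈ range (n - i + 1), f i k
      = ∑ p ∈ range (n + 1), ∑ k ∈ range (p + 1), f (p - k) k := by
  rw [Finset.sum_sigma' (range (n+1)) (fun i => range (n - i + 1)) (fun i k => f i k),
    Finset.sum_sigma' (range (n+1)) (fun p => range (p + 1)) (fun p k => f (p - k) k)]
  refine Finset.sum_nbij' (fun x => ⟨x.1 + x.2, x.2⟩) (fun x => ⟨x.1 - x.2, x.2⟩) ?_ ?_ ?_ ?_ ?_
  · rintro ⟨a, b⟩ h
    simp only [Finset.mem_sigma, Finset.mem_range] at h ⊢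
    omega
  · rintro ⟨a, b⟩ h
    simp only [Finset.mem_sigma, Finset.mem_range] at h ⊢
    omega
  · rintro ⟨a, b⟩ h
    simp only [Finset.mem_sigma, Finset.mem_range] at h
    have : a + b - b = a := by omega
    simp [this]
  · rintro ⟨a, b⟩ h
    simp only [Finset.mem_sigma, Finset.mem_range] at h
    have : a - b + b = a := by omega
    simp [this]
  · rintro ⟨a, b⟩ h
    simp only [Finset.mem_sigma, Finset.mem_range] at h
    have : a + b - b = a := by omega
    simp [this]

lemma gaussC (m : ℕ) : ∑ k ∈ range (m + 1), ((k : ℂ) + 1)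
    = ((m : ℂ) + 1) * ((m : ℂ) + 2) / 2 := by
  induction m with
  | zero => norm_num
  | succ m ih =>
    rw [Finset.sum_range_succ, ih]
    push_cast
    ring

end Tri

variable {A : Type*} [Ring A] [Algebra ℂ A]

/-- The operator `L = (1/2) • ad (h_{j+l} - h_{j-l})`. -/
def Lop (H : ℤ → A) (j l : ℤ) (a : A) : A := ((1 : ℂ) / 2) • ⁅H (j + l) - H (j - l), a⁆

variable {X Y H : ℤ → A} {j l : ℤ}

lemma Lop_add (a b : A) : Lop H j l (a + b) = Lop H j l a + Lop H j l b := by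
  simp [Lop, lie_add, smul_add]

lemma Lop_smul (c : ℂ) (a : A) : Lop H j l (c • a) = c • Lop H j l a := by
  rw [Lop, Lop, lie_smul, smul_comm]

lemma Lop_neg (a : A) : Lop H j l (-a) = -Lop H j l a := by
  rw [Lop, Lop, lie_neg, smul_neg]

lemma Lop_zero : Lop H j l (0 : A) = 0 := by simp [Lop]

lemma Dp_succ (u : ℕ) : Dp X H j l (u + 1) = Lop H j l (Dp X H j l u) := by
  show ((1 : ℂ) / 2) • ⁅Dp X H j l u, Lam1 H j l⁆ = _
  rw [Lop, Lam1, lie_neg, lie_skew]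

lemma Dm_succ (u : ℕ) : Dm Y H j l (u + 1) = -Lop H j l (Dm Y H j l u) := by
  show (-((1 : ℂ) / 2)) • ⁅Dm Y H j l u, Lam1 H j l⁆ = _
  rw [Lop, Lam1, lie_neg, lie_skew, neg_smul]

lemma lie_spanH (hHH : ∀ k m : ℤ, ⁅H k, H m⁆ = 0) {a b : A}
    (ha : a ∈ Submodule.span ℂ (Set.range H))
    (hb : b ∈ Submodule.span ℂ (Set.range H)) : ⁅a, b⁆ = 0 := by
  induction ha using Submodule.span_induction with
  | mem x hx =>
    obtain ⟨k, rfl⟩ := hx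
    induction hb using Submodule.span_induction with
    | mem y hy => obtain ⟨m, rfl⟩ := hy; exact hHH k m
    | zero => simp
    | add u v hu hv h1 h2 => rw [lie_add, h1, h2, add_zero]
    | smul c u hu h1 => rw [lie_smul, h1, smul_zero]
  | zero => simp
  | add u v hu hv h1 h2 => rw [add_lie, h1, h2, add_zero]
  | smul c u hu h1 => rw [smul_lie, h1, smul_zero]

lemma sub_H_mem : H (j + l) - H (j - l) ∈ Submodule.span ℂ (Set.range H) :=
  sub_mem (Submodule.subset_span ⟨_, rfl⟩) (Submodule.subset_span ⟨_, rfl⟩)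

lemma Lop_spanH (hHH : ∀ k m : ℤ, ⁅H k, H m⁆ = 0) {a : A}
    (ha : a ∈ Submodule.span ℂ (Set.range H)) : Lop H j l a = 0 := by
  rw [Lop, lie_spanH hHH sub_H_mem ha, smul_zero]

lemma lie_Lop (hHH : ∀ k m : ℤ, ⁅H k, H m⁆ = 0) {a : A}
    (ha : a ∈ Submodule.span ℂ (Set.range H)) (b : A) :
    ⁅a, Lop H j l b⁆ = Lop H j l ⁅a, b⁆ := by
  rw [Lop, Lop, lie_smul]
  congr 1
  rw [leibniz_lie, lie_spanH hHH ha sub_H_mem, zero_lie, zero_add]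

lemma Lop_spanY (hHY : ∀ k l : ℤ, ⁅H k, Y l⁆ = -(2 • (Y (l + k) + Y (l - k)))) {a : A}
    (ha : a ∈ Submodule.span ℂ (Set.range Y)) :
    Lop H j l a ∈ Submodule.span ℂ (Set.range Y) := by
  induction ha using Submodule.span_induction with
  | mem x hx =>
    obtain ⟨m, rfl⟩ := hx
    rw [Lop, sub_lie, hHY, hHY]
    refine Submodule.smul_mem _ _ (sub_mem (neg_mem (nsmul_mem (add_mem ?_ ?_) 2))
      (neg_mem (nsmul_mem (add_mem ?_ ?_) 2))) <;>
      exact Submodule.subset_span ⟨_, rfl⟩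
  | zero => rw [Lop_zero]; exact zero_mem _
  | add x y hx hy h1 h2 => rw [Lop_add]; exact add_mem h1 h2
  | smul c x hx h1 => rw [Lop_smul]; exact Submodule.smul_mem _ _ h1

lemma Dm_spanY (hHY : ∀ k l : ℤ, ⁅H k, Y l⁆ = -(2 • (Y (l + k) + Y (l - k)))) (u : ℕ) :
    Dm Y H j l u ∈ Submodule.span ℂ (Set.range Y) := by
  induction u with
  | zero => exact Submodule.subset_span ⟨l, rfl⟩
  | succ u ih =>
    rw [Dm_succ]
    exact neg_mem (Lop_spanY hHY ih)

lemma p_spanH (hXY : ∀ j l : ℤ, ⁅X j, Y l⁆ = H (j + l) - H (j - l))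
    (hHY : ∀ k l : ℤ, ⁅H k, Y l⁆ = -(2 • (Y (l + k) + Y (l - k)))) (u : ℕ) :
    ⁅X j, Dm Y H j l u⁆ ∈ Submodule.span ℂ (Set.range H) := by
  suffices hgen : ∀ b ∈ Submodule.span ℂ (Set.range Y),
      ⁅X j, b⁆ ∈ Submodule.span ℂ (Set.range H) from
    hgen _ (Dm_spanY (H := H) (j := j) (l := l) hHY u)
  intro b hb
  induction hb using Submodule.span_induction with
  | mem x hx =>
    obtain ⟨m, rfl⟩ := hx
    rw [hXY]
    exact sub_mem (Submodule.subset_span ⟨_, rfl⟩) (Submodule.subset_span ⟨_, rfl⟩)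
  | zero => rw [lie_zero]; exact zero_mem _
  | add x y hx hy h1 h2 => rw [lie_add]; exact add_mem h1 h2
  | smul c x hx h1 => rw [lie_smul]; exact Submodule.smul_mem _ _ h1

lemma hHX' (hXneg : ∀ m : ℤ, X (-m) = -X m)
    (hHX : ∀ k j : ℤ, ⁅H k, X j⁆ = 2 • (X (j + k) - X (k - j))) (k a : ℤ) :
    ⁅H k, X a⁆ = (2 : ℂ) • X (a + k) + (2 : ℂ) • X (a - k) := by
  rw [hHX, show k - a = -(a - k) by ring, hXneg, ← Nat.cast_smul_eq_nsmul ℂ]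
  push_cast
  rw [smul_sub, smul_neg, sub_neg_eq_add]

lemma hHY' (hHY : ∀ k l : ℤ, ⁅H k, Y l⁆ = -(2 • (Y (l + k) + Y (l - k)))) (k a : ℤ) :
    ⁅H k, Y a⁆ = -((2 : ℂ) • Y (a + k)) - (2 : ℂ) • Y (a - k) := by
  rw [hHY, ← Nat.cast_smul_eq_nsmul ℂ]
  push_cast
  rw [smul_add]
  abel

lemma auxK_base (hXneg : ∀ m : ℤ, X (-m) = -X m)
    (hXY : ∀ j l : ℤ, ⁅X j, Y l⁆ = H (j + l) - H (j - l))
    (hHX : ∀ k j : ℤ, ⁅H k, X j⁆ = 2 • (X (j + k) - X (k - j)))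
    (hHY : ∀ k l : ℤ, ⁅H k, Y l⁆ = -(2 • (Y (l + k) + Y (l - k)))) (m : ℤ) :
    ⁅⁅X j, Lop H j l (Y m)⁆, X j⁆ = -Lop H j l ⁅⁅X j, Y m⁆, X j⁆ := by
  have hX2 := hHX' (H := H) hXneg hHX
  have hY2 := hHY' (H := H) hHY
  simp only [Lop, lie_smul, smul_lie, sub_lie, lie_sub, hY2, hX2, hXY, lie_add, add_lie,
    lie_neg, neg_lie, smul_add, smul_sub, smul_neg]
  ring_nf
  module

lemma auxK (hXneg : ∀ m : ℤ, X (-m) = -X m)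
    (hXY : ∀ j l : ℤ, ⁅X j, Y l⁆ = H (j + l) - H (j - l))
    (hHX : ∀ k j : ℤ, ⁅H k, X j⁆ = 2 • (X (j + k) - X (k - j)))
    (hHY : ∀ k l : ℤ, ⁅H k, Y l⁆ = -(2 • (Y (l + k) + Y (l - k)))) {a : A}
    (ha : a ∈ Submodule.span ℂ (Set.range Y)) :
    ⁅⁅X j, Lop H j l a⁆, X j⁆ = -Lop H j l ⁅⁅X j, a⁆, X j⁆ := by
  induction ha using Submodule.span_induction with
  | mem x hx =>
    obtain ⟨m, rfl⟩ := hx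
    exact auxK_base hXneg hXY hHX hHY m
  | zero => simp [Lop_zero]
  | add x y hx hy h1 h2 =>
    simp only [Lop_add, lie_add, add_lie, h1, h2]
    abel
  | smul c x hx h1 =>
    simp only [Lop_smul, lie_smul, smul_lie, h1, smul_neg]

lemma psi_Dm (hXneg : ∀ m : ℤ, X (-m) = -X m)
    (hXY : ∀ j l : ℤ, ⁅X j, Y l⁆ = H (j + l) - H (j - l))
    (hHX : ∀ k j : ℤ, ⁅H k, X j⁆ = 2 • (X (j + k) - X (k - j)))
    (hHY : ∀ k l : ℤ, ⁅H k, Y l⁆ = -(2 • (Y (l + k) + Y (l - k)))) (s : ℕ) :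
    ⁅⁅X j, Dm Y H j l s⁆, X j⁆ = (2 : ℂ) • Dp X H j l (s + 1) := by
  induction s with
  | zero =>
    show ⁅⁅X j, Y l⁆, X j⁆ = (2 : ℂ) • Dp X H j l 1
    rw [Dp_succ 0]
    show _ = (2 : ℂ) • Lop H j l (X j)
    rw [hXY, Lop, smul_smul]
    norm_num
  | succ s ih =>
    rw [Dm_succ, lie_neg, neg_lie, auxK hXneg hXY hHX hHY (Dm_spanY hHY s), neg_neg,
      ih, Lop_smul, ← Dp_succ]

lemma p_lie_Dp (hXneg : ∀ m : ℤ, X (-m) = -X m)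
    (hXY : ∀ j l : ℤ, ⁅X j, Y l⁆ = H (j + l) - H (j - l))
    (hHX : ∀ k j : ℤ, ⁅H k, X j⁆ = 2 • (X (j + k) - X (k - j)))
    (hHY : ∀ k l : ℤ, ⁅H k, Y l⁆ = -(2 • (Y (l + k) + Y (l - k))))
    (hHH : ∀ k m : ℤ, ⁅H k, H m⁆ = 0) (s : ℕ) : ∀ u : ℕ,
    ⁅⁅X j, Dm Y H j l s⁆, Dp X H j l u⁆ = (2 : ℂ) • Dp X H j l (s + u + 1) := by
  intro u
  induction u with
  | zero => exact psi_Dm hXneg hXY hHX hHY s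
  | succ u ih =>
    have harith : s + (u + 1) + 1 = s + u + 1 + 1 := by omega
    rw [harith, Dp_succ, lie_Lop hHH (p_spanH hXY hHY s), ih, Lop_smul, ← Dp_succ]

lemma D_mul_p (hXneg : ∀ m : ℤ, X (-m) = -X m)
    (hXY : ∀ j l : ℤ, ⁅X j, Y l⁆ = H (j + l) - H (j - l))
    (hHX : ∀ k j : ℤ, ⁅H k, X j⁆ = 2 • (X (j + k) - X (k - j)))
    (hHY : ∀ k l : ℤ, ⁅H k, Y l⁆ = -(2 • (Y (l + k) + Y (l - k))))
    (hHH : ∀ k m : ℤ, ⁅H k, H m⁆ = 0) (s w : ℕ) :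
    Dp X H j l w * ⁅X j, Dm Y H j l s⁆
      = ⁅X j, Dm Y H j l s⁆ * Dp X H j l w - (2 : ℂ) • Dp X H j l (s + w + 1) := by
  have h := p_lie_Dp (j := j) (l := l) hXneg hXY hHX hHY hHH s w
  generalize ⁅X j, Dm Y H j l s⁆ = q at h ⊢
  rw [Ring.lie_def] at h
  rw [← h]
  abel

lemma p_comm_p (hXY : ∀ j l : ℤ, ⁅X j, Y l⁆ = H (j + l) - H (j - l))
    (hHY : ∀ k l : ℤ, ⁅H k, Y l⁆ = -(2 • (Y (l + k) + Y (l - k))))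
    (hHH : ∀ k m : ℤ, ⁅H k, H m⁆ = 0) (s t : ℕ) :
    ⁅X j, Dm Y H j l s⁆ * ⁅X j, Dm Y H j l t⁆
      = ⁅X j, Dm Y H j l t⁆ * ⁅X j, Dm Y H j l s⁆ := by
  have h := lie_spanH hHH (p_spanH (j := j) (l := l) hXY hHY s) (p_spanH (j := j) (l := l) hXY hHY t)
  rw [Ring.lie_def, sub_eq_zero] at h
  exact h

lemma Lam_succ (X : ℤ → A) (k : ℕ) :
    Lam X Y H j l (k + 1) = (-(((k : ℂ) + 1)⁻¹)) •
      ∑ i ∈ range (k + 1), ⁅X j, Dm Y H j l i⁆ * Lam X Y H j l (k - i) := by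
  rw [Lam]
  rfl

lemma sum_p_Lam (X : ℤ → A) (k : ℕ) :
    ∑ i ∈ range (k + 1), ⁅X j, Dm Y H j l i⁆ * Lam X Y H j l (k - i)
      = (-((k : ℂ) + 1)) • Lam X Y H j l (k + 1) := by
  rw [Lam_succ, smul_smul]
  have h0 : ((k : ℂ) + 1) ≠ 0 := Nat.cast_add_one_ne_zero k
  have h1 : (-((k : ℂ) + 1)) * (-(((k : ℂ) + 1)⁻¹)) = 1 := by field_simp
  rw [h1, one_smul]

lemma p_mul_Lam (hXY : ∀ j l : ℤ, ⁅X j, Y l⁆ = H (j + l) - H (j - l))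
    (hHY : ∀ k l : ℤ, ⁅H k, Y l⁆ = -(2 • (Y (l + k) + Y (l - k))))
    (hHH : ∀ k m : ℤ, ⁅H k, H m⁆ = 0) :
    ∀ n s : ℕ, ⁅X j, Dm Y H j l s⁆ * Lam X Y H j l n
      = Lam X Y H j l n * ⁅X j, Dm Y H j l s⁆ := by
  intro n
  induction n using Nat.strong_induction_on with
  | _ n ih =>
    intro s
    match n with
    | 0 => simp [Lam]
    | n + 1 =>
      rw [Lam_succ, mul_smul_comm, smul_mul_assoc, Finset.mul_sum, Finset.sum_mul]
      congr 1
      refine Finset.sum_congr rfl fun i hi => ?_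
      rw [← mul_assoc, p_comm_p hXY hHY hHH s i, mul_assoc,
        ih (n - i) (by omega) s, ← mul_assoc]

section Main

variable (hXneg : ∀ m : ℤ, X (-m) = -X m)
variable (hXY : ∀ j l : ℤ, ⁅X j, Y l⁆ = H (j + l) - H (j - l))
variable (hHX : ∀ k j : ℤ, ⁅H k, X j⁆ = 2 • (X (j + k) - X (k - j)))
variable (hHY : ∀ k l : ℤ, ⁅H k, Y l⁆ = -(2 • (Y (l + k) + Y (l - k))))
variable (hHH : ∀ k m : ℤ, ⁅H k, H m⁆ = 0)

include hXneg hXY hHX hHY hHH in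
lemma main_aux : ∀ n u : ℕ,
    Dp X H j l u * Lam X Y H j l n
      = ∑ i ∈ range (n + 1), ((i : ℂ) + 1) • (Lam X Y H j l (n - i) * Dp X H j l (i + u)) := by
  have hps : ∀ s w : ℕ, Dp X H j l w * ⁅X j, Dm Y H j l s⁆
      = ⁅X j, Dm Y H j l s⁆ * Dp X H j l w - (2 : ℂ) • Dp X H j l (s + w + 1) :=
    D_mul_p hXneg hXY hHX hHY hHH
  have hsum : ∀ k : ℕ, ∑ i ∈ range (k + 1), ⁅X j, Dm Y H j l i⁆ * Lam X Y H j l (k - i)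
      = (-((k : ℂ) + 1)) • Lam X Y H j l (k + 1) := fun k => sum_p_Lam X k
  intro n
  induction n using Nat.strong_induction_on with
  | _ n ih =>
    match n with
    | 0 =>
      intro u
      simp [Lam]
    | n + 1 =>
      intro u
      have hn0 : ((n : ℂ) + 1) ≠ 0 := Nat.cast_add_one_ne_zero n
      set c : ℂ := -(((n : ℂ) + 1)⁻¹) with hc
      set D : ℕ → A := Dp X H j l with hD
      set Λ : ℕ → A := Lam X Y H j l with hΛ
      set P : ℕ → A := fun s => ⁅X j, Dm Y H j l s⁆ with hP
      -- Step 1: unfold the recursion and push `D u` inside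
      have step1 : D u * Λ (n + 1)
          = c • ((∑ i ∈ range (n + 1), P i * (D u * Λ (n - i)))
              - (2 : ℂ) • ∑ i ∈ range (n + 1), D (i + u + 1) * Λ (n - i)) := by
        rw [hΛ, Lam_succ, mul_smul_comm, Finset.mul_sum]
        congr 1
        rw [Finset.smul_sum, ← Finset.sum_sub_distrib]
        refine Finset.sum_congr rfl fun i hi => ?_
        rw [← mul_assoc, hps i u, sub_mul, smul_mul_assoc, mul_assoc]
      -- Step 2: apply the induction hypothesis to both inner products
      have step2 : D u * Λ (n + 1)
          = c • ((∑ i ∈ range (n + 1), ∑ k ∈ range (n - i + 1),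
                ((k : ℂ) + 1) • ((P i * Λ (n - i - k)) * D (k + u)))
              - (2 : ℂ) • ∑ i ∈ range (n + 1), ∑ k ∈ range (n - i + 1),
                ((k : ℂ) + 1) • (Λ (n - i - k) * D (k + (i + u + 1)))) := by
        rw [step1]
        congr 2
        · refine Finset.sum_congr rfl fun i hi => ?_
          rw [ih (n - i) (by simp only [Finset.mem_range] at hi; omega) u, Finset.mul_sum]
          refine Finset.sum_congr rfl fun k hk => ?_
          rw [mul_smul_comm, mul_assoc]
        · refine congrArg _ (Finset.sum_congr rfl fun i hi => ?_)
          rw [ih (n - i) (by simp only [Finset.mem_range] at hi; omega) (i + u + 1)]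
      -- Step 3: rework the first double sum
      have step3 : (∑ i ∈ range (n + 1), ∑ k ∈ range (n - i + 1),
            ((k : ℂ) + 1) • ((P i * Λ (n - i - k)) * D (k + u)))
          = ∑ k ∈ range (n + 1),
              (((k : ℂ) + 1) * (-((↑(n - k) : ℂ) + 1))) • (Λ (n - k + 1) * D (k + u)) := by
        rw [tri_swap]
        refine Finset.sum_congr rfl fun k hk => ?_
        have hre : ∀ i ∈ range (n - k + 1),
            ((k : ℂ) + 1) • ((P i * Λ (n - i - k)) * D (k + u))
              = ((k : ℂ) + 1) • ((P i * Λ (n - k - i)) * D (k + u)) := by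
          intro i hi
          have e : n - i - k = n - k - i := by omega
          rw [e]
        rw [Finset.sum_congr rfl hre, ← Finset.smul_sum, ← Finset.sum_mul, hsum (n - k),
          smul_mul_assoc, smul_smul]
      -- Step 4: rework the second double sum
      have step4 : (∑ i ∈ range (n + 1), ∑ k ∈ range (n - i + 1),
            ((k : ℂ) + 1) • (Λ (n - i - k) * D (k + (i + u + 1))))
          = ∑ p ∈ range (n + 1),
              (((p : ℂ) + 1) * ((p : ℂ) + 2) / 2) • (Λ (n - p) * D (p + u + 1)) := by
        rw [tri_diag]
        refine Finset.sum_congr rfl fun p hp => ?_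
        simp only [Finset.mem_range] at hp
        have hre : ∀ k ∈ range (p + 1),
            ((k : ℂ) + 1) • (Λ (n - (p - k) - k) * D (k + ((p - k) + u + 1)))
              = ((k : ℂ) + 1) • (Λ (n - p) * D (p + u + 1)) := by
          intro k hk
          simp only [Finset.mem_range] at hk
          have e1 : n - (p - k) - k = n - p := by omega
          have e2 : k + ((p - k) + u + 1) = p + u + 1 := by omega
          rw [e1, e2]
        rw [Finset.sum_congr rfl hre, ← Finset.sum_smul, gaussC]
      -- Step 5: peel off extreme terms of both resulting sums
      have haveA : c • (∑ k ∈ range (n + 1),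
            (((k : ℂ) + 1) * (-((↑(n - k) : ℂ) + 1))) • (Λ (n - k + 1) * D (k + u)))
          = (∑ k ∈ range n,
                (c * (((k : ℂ) + 2) * (-(↑(n - k) : ℂ)))) • (Λ (n - k) * D (k + u + 1)))
              + Λ (n + 1) * D u := by
        rw [Finset.smul_sum, Finset.sum_range_succ']
        congr 1
        · refine Finset.sum_congr rfl fun k hk => ?_
          simp only [Finset.mem_range] at hk
          have e1 : n - (k + 1) + 1 = n - k := by omega
          have e2 : k + 1 + u = k + u + 1 := by omega
          rw [e1, e2, smul_smul]
          congr 1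
          have e4 : (↑(n - (k + 1)) : ℂ) + 1 = (↑(n - k) : ℂ) := by
            rw [← e1]
            push_cast
            ring
          rw [e4]
          push_cast
          ring
        · have e1 : n - 0 + 1 = n + 1 := by omega
          have e2 : 0 + u = u := by omega
          rw [e1, e2, smul_smul]
          have e3 : c * (((↑(0 : ℕ) : ℂ) + 1) * (-((↑(n - 0) : ℂ) + 1))) = 1 := by
            simp only [Nat.cast_zero, Nat.sub_zero, hc]
            field_simp
            ring
          rw [e3, one_smul]
      have haveB : (c * 2) • (∑ p ∈ range (n + 1),
            (((p : ℂ) + 1) * ((p : ℂ) + 2) / 2) • (Λ (n - p) * D (p + u + 1)))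
          = (∑ p ∈ range n,
                (c * 2 * (((p : ℂ) + 1) * ((p : ℂ) + 2) / 2)) • (Λ (n - p) * D (p + u + 1)))
              + (c * 2 * (((n : ℂ) + 1) * ((n : ℂ) + 2) / 2)) • (Λ 0 * D (n + u + 1)) := by
        rw [Finset.smul_sum, Finset.sum_range_succ]
        congr 1
        · exact Finset.sum_congr rfl fun p hp => smul_smul _ _ _
        · rw [smul_smul, Nat.sub_self]
      -- Step 6: rework the target sum
      have target_eq : (∑ i ∈ range (n + 1 + 1), ((i : ℂ) + 1) • (Λ (n + 1 - i) * D (i + u)))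
          = Λ (n + 1) * D u + ((∑ k ∈ range n, ((k : ℂ) + 2) • (Λ (n - k) * D (k + u + 1)))
              + ((n : ℂ) + 2) • (Λ 0 * D (n + u + 1))) := by
        rw [Finset.sum_range_succ', Finset.sum_range_succ]
        have hmid : ∀ k ∈ range n,
            ((↑(k + 1) : ℂ) + 1) • (Λ (n + 1 - (k + 1)) * D (k + 1 + u))
              = ((k : ℂ) + 2) • (Λ (n - k) * D (k + u + 1)) := by
          intro k hk
          have e1 : n + 1 - (k + 1) = n - k := by omega
          have e2 : k + 1 + u = k + u + 1 := by omega
          have e3 : ((↑(k + 1) : ℂ) + 1) = (k : ℂ) + 2 := by push_cast; ring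
          rw [e1, e2, e3]
        have htop : ((↑(n + 1) : ℂ) + 1) • (Λ (n + 1 - (n + 1)) * D (n + 1 + u))
            = ((n : ℂ) + 2) • (Λ 0 * D (n + u + 1)) := by
          have e1 : n + 1 - (n + 1) = 0 := by omega
          have e2 : n + 1 + u = n + u + 1 := by omega
          have e3 : ((↑(n + 1) : ℂ) + 1) = (n : ℂ) + 2 := by push_cast; ring
          rw [e1, e2, e3]
        have h0 : ((↑(0 : ℕ) : ℂ) + 1) • (Λ (n + 1 - 0) * D (0 + u)) = Λ (n + 1) * D u := by
          norm_num
        rw [Finset.sum_congr rfl hmid, htop, h0]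
        abel
      -- Step 7: combine everything
      have hS : (∑ k ∈ range n,
            (c * (((k : ℂ) + 2) * (-(↑(n - k) : ℂ)))) • (Λ (n - k) * D (k + u + 1)))
          - (∑ k ∈ range n,
            (c * 2 * (((k : ℂ) + 1) * ((k : ℂ) + 2) / 2)) • (Λ (n - k) * D (k + u + 1)))
          = ∑ k ∈ range n, ((k : ℂ) + 2) • (Λ (n - k) * D (k + u + 1)) := by
        rw [← Finset.sum_sub_distrib]
        refine Finset.sum_congr rfl fun k hk => ?_
        simp only [Finset.mem_range] at hk
        rw [← sub_smul]
        congr 1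
        have hcast : (↑(n - k) : ℂ) = (n : ℂ) - (k : ℂ) := by
          rw [Nat.cast_sub (by omega)]
        rw [hc, hcast]
        field_simp
        ring
      have hTB : (c * 2 * (((n : ℂ) + 1) * ((n : ℂ) + 2) / 2)) • (Λ 0 * D (n + u + 1))
          = -(((n : ℂ) + 2) • (Λ 0 * D (n + u + 1))) := by
        rw [← neg_smul]
        congr 1
        rw [hc]
        field_simp
      rw [step2, step3, step4, smul_sub, smul_smul, haveA, haveB, target_eq, hTB, ← hS]
      abel

end Main

end DpLamAux

/-- `D^{Γ,+}_{u,1}(j,l) Λ^Γ_{j,l,n} = ∑_{i=0}^n (i+1) Λ^Γ_{j,l,n-i} D^{Γ,+}_{i+u,1}(j,l)`. -/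
theorem Dp_mul_Lam (X Y H : ℤ → A)
    (hXneg : ∀ m : ℤ, X (-m) = -X m) (hX0 : X 0 = 0)
    (hYneg : ∀ m : ℤ, Y (-m) = -Y m) (hY0 : Y 0 = 0)
    (hHneg : ∀ m : ℤ, H (-m) = H m)
    (hXY : ∀ j l : ℤ, ⁅X j, Y l⁆ = H (j + l) - H (j - l))
    (hHX : ∀ k j : ℤ, ⁅H k, X j⁆ = 2 • (X (j + k) - X (k - j)))
    (hHY : ∀ k l : ℤ, ⁅H k, Y l⁆ = -(2 • (Y (l + k) + Y (l - k))))
    (hHH : ∀ k m : ℤ, ⁅H k, H m⁆ = 0)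
    (u n : ℕ) (j l : ℕ+) :
    Dp X H ((j : ℕ) : ℤ) ((l : ℕ) : ℤ) u * Lam X Y H ((j : ℕ) : ℤ) ((l : ℕ) : ℤ) n =
      ∑ i ∈ Finset.range (n + 1),
        (i + 1) • (Lam X Y H ((j : ℕ) : ℤ) ((l : ℕ) : ℤ) (n - i) *
          Dp X H ((j : ℕ) : ℤ) ((l : ℕ) : ℤ) (i + u)) := by
  rw [DpLamAux.main_aux hXneg hXY hHX hHY hHH n u]
  refine Finset.sum_congr rfl fun i hi => ?_
  rw [← Nat.cast_smul_eq_nsmul ℂ (i + 1)]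
  push_cast
  ring_nf
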